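/- Let C be a real symmetric invertible d×d matrix and Z₀ a real symmetric positive definite d×d matrix, and let Z(t) = e^{2Ct} (Z₀⁻¹ + 4∫₀ᵗ e^{4Cs} ds)⁻¹ e^{2Ct} be the solution of the Riccati equation Z′ = 2(CZ + ZC) − 4Z² with Z(0) = Z₀. Then Z(t) converges exponentially fast to the positive part C⁺ of C: there exist constants K > 0 and ρ > 0 such that ‖Z(t) − C⁺‖_F ≤ K e^{−ρ t} for all t ≥ 0. -/

import Mathlib

open Matrix Filter Topology

/-- Frobenius norm of a real matrix. -/
noncomputable def frobNorm {n m : ℕ} (M : Matrix (Fin n) (Fin m) ℝ) : ℝ :=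
  Real.sqrt (∑ i, ∑ j, (M i j) ^ 2)

/-- `Mfun C Z0 t = Z0⁻¹ + 4 ∫₀ᵗ e^{4Cs} ds` (the integral is taken entrywise). -/
noncomputable def Mfun {d : ℕ} (C Z0 : Matrix (Fin d) (Fin d) ℝ) (t : ℝ) :
    Matrix (Fin d) (Fin d) ℝ :=
  Z0⁻¹ + Matrix.of fun i j =>
    4 * ∫ s in (0:ℝ)..t, (NormedSpace.exp ((4 * s) • C)) i j

/-- `Zfun C Z0 t = e^{2Ct} (Mfun C Z0 t)⁻¹ e^{2Ct}`, the solution of the Riccati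
equation `Z' = 2(CZ + ZC) - 4Z²` with `Z(0) = Z0`. -/
noncomputable def Zfun {d : ℕ} (C Z0 : Matrix (Fin d) (Fin d) ℝ) (t : ℝ) :
    Matrix (Fin d) (Fin d) ℝ :=
  NormedSpace.exp ((2 * t) • C) * (Mfun C Z0 t)⁻¹ * NormedSpace.exp ((2 * t) • C)

/-! ### Auxiliary lemmas -/

lemma riccati_integral_exp_const_mul (c t : ℝ) (hc : c ≠ 0) :
    ∫ s in (0:ℝ)..t, Real.exp (c * s) = (Real.exp (c * t) - 1) / c := by
  rw [intervalIntegral.integral_comp_mul_left (fun x => Real.exp x) hc]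
  simp [integral_exp, Real.exp_zero, smul_eq_mul]
  ring

lemma riccati_conj_diag_entry {d : ℕ} (U : Matrix (Fin d) (Fin d) ℝ) (v : Fin d → ℝ)
    (i j : Fin d) :
    (U * diagonal v * Uᵀ) i j = ∑ k, U i k * v k * U j k := by
  rw [mul_apply]
  simp [mul_diagonal, transpose_apply]

lemma riccati_frobNorm_conj {n : ℕ} (U M : Matrix (Fin n) (Fin n) ℝ)
    (hU : Uᵀ * U = 1) :
    frobNorm (U * M * Uᵀ) = frobNorm M := by
  have key : ∀ N : Matrix (Fin n) (Fin n) ℝ, ∑ i, ∑ j, (N i j)^2 = trace (Nᵀ * N) := by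
    intro N
    rw [trace]
    simp only [diag_apply, mul_apply, transpose_apply, sq]
    exact Finset.sum_comm
  unfold frobNorm
  rw [key, key]
  congr 1
  have : (U * M * Uᵀ)ᵀ * (U * M * Uᵀ) = U * (Mᵀ * M) * Uᵀ := by
    simp only [transpose_mul, transpose_transpose, Matrix.mul_assoc]
    rw [← Matrix.mul_assoc Uᵀ U, hU, Matrix.one_mul]
  rw [this, trace_mul_comm, ← Matrix.mul_assoc, ← Matrix.mul_assoc, hU, Matrix.one_mul]

lemma riccati_frobNorm_le {n : ℕ} (M : Matrix (Fin n) (Fin n) ℝ) {c : ℝ} (hc : 0 ≤ c)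
    (h : ∀ i j, |M i j| ≤ c) : frobNorm M ≤ n * c := by
  have h1 : ∑ i, ∑ j, (M i j)^2 ≤ ((n : ℝ) * c)^2 := by
    calc ∑ i, ∑ j, (M i j)^2 ≤ ∑ _i : Fin n, ∑ _j : Fin n, c^2 := by
          apply Finset.sum_le_sum; intro i _
          apply Finset.sum_le_sum; intro j _
          calc (M i j)^2 = |M i j|^2 := (sq_abs _).symm
            _ ≤ c^2 := by apply pow_le_pow_left₀ (abs_nonneg _) (h i j)
      _ = (n : ℝ) * ((n : ℝ) * c^2) := by simp [Finset.sum_const, mul_assoc]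
      _ = ((n : ℝ) * c)^2 := by ring
  calc frobNorm M ≤ Real.sqrt (((n:ℝ)*c)^2) := Real.sqrt_le_sqrt h1
    _ = (n:ℝ) * c := Real.sqrt_sq (by positivity)

lemma riccati_posdef_conj {d : ℕ} {M U : Matrix (Fin d) (Fin d) ℝ} (hM : M.PosDef)
    (hU : Uᵀ * U = 1) : (Uᵀ * M * U).PosDef := by
  have hMsymm : Mᵀ = M := by
    have := hM.isHermitian
    rwa [Matrix.IsHermitian, conjTranspose_eq_transpose_of_trivial] at this
  refine posDef_iff_dotProduct_mulVec.mpr ⟨?_, ?_⟩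
  · rw [Matrix.IsHermitian, conjTranspose_eq_transpose_of_trivial]
    rw [transpose_mul, transpose_mul, transpose_transpose, hMsymm, Matrix.mul_assoc]
  · intro x hx
    have hUx : U *ᵥ x ≠ 0 := by
      intro h
      apply hx
      have h2 : x = Uᵀ *ᵥ (U *ᵥ x) := by rw [mulVec_mulVec, hU, one_mulVec]
      rw [h2, h, mulVec_zero]
    have := hM.dotProduct_mulVec_pos hUx
    rw [star_trivial] at this ⊢
    calc (0:ℝ) < (U *ᵥ x) ⬝ᵥ M *ᵥ (U *ᵥ x) := this
      _ = x ⬝ᵥ (Uᵀ * M * U) *ᵥ x := by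
          rw [← mulVec_mulVec, ← mulVec_mulVec, dotProduct_mulVec x, vecMul_transpose]

lemma riccati_posdef_diag_entry_pos {d : ℕ} {X : Matrix (Fin d) (Fin d) ℝ} (hX : X.PosDef)
    (i : Fin d) : 0 < X i i := by
  have := hX.dotProduct_mulVec_pos (x := Pi.single i 1) (by simp [Pi.single_eq_same, Function.ne_iff])
  rw [star_trivial, mulVec_single, single_dotProduct] at this
  simpa using this

lemma riccati_inv_diag_le {d : ℕ} {Bm : Matrix (Fin d) (Fin d) ℝ} (hB : Bm.PosDef)
    {γ : ℝ} (i : Fin d) (hγ : 0 < γ)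
    (hform : ∀ v : Fin d → ℝ, γ * (v i)^2 ≤ v ⬝ᵥ Bm *ᵥ v) :
    Bm⁻¹ i i ≤ 1/γ := by
  set w := Bm⁻¹ *ᵥ Pi.single i 1 with hw
  have hBB : Bm * Bm⁻¹ = 1 := mul_nonsing_inv _ hB.det_pos.ne'.isUnit
  have h1 : Bm *ᵥ w = Pi.single i 1 := by rw [hw, mulVec_mulVec, hBB, one_mulVec]
  have h2 : w ⬝ᵥ Bm *ᵥ w = w i := by rw [h1, dotProduct_single, mul_one]
  have h3 : w i = Bm⁻¹ i i := by rw [hw]; simp [mulVec_single]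
  have h4 := hform w
  have h5 : 0 < Bm⁻¹ i i := riccati_posdef_diag_entry_pos hB.inv i
  rw [h2, h3] at h4
  rw [le_div_iff₀ hγ]
  nlinarith [h4, h5, hγ]

lemma riccati_posdef_entry_sq_le {d : ℕ} {X : Matrix (Fin d) (Fin d) ℝ} (hX : X.PosDef)
    (hsymm : Xᵀ = X) (i j : Fin d) : (X i j)^2 ≤ X i i * X j j := by
  rcases eq_or_ne i j with rfl | hij
  · rw [sq]
  · have hsym' : X j i = X i j := by
      have h := congrFun (congrFun hsymm j) i; simpa using h.symm
    set v : Fin d → ℝ :=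
      X j j • (Pi.single i 1 : Fin d → ℝ) - X i j • (Pi.single j 1 : Fin d → ℝ) with hv
    have hpsd := hX.posSemidef.dotProduct_mulVec_nonneg v
    rw [star_trivial] at hpsd
    have hjj : 0 < X j j := riccati_posdef_diag_entry_pos hX j
    have expand : v ⬝ᵥ X *ᵥ v
        = X j j * X j j * X i i - 2 * X j j * X i j * X i j + X i j * X i j * X j j := by
      simp [hv, mulVec_sub, mulVec_smul, dotProduct_sub, sub_dotProduct, smul_dotProduct,
        dotProduct_smul, mulVec_single, single_dotProduct, smul_eq_mul, hsym']
      ring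
    rw [expand] at hpsd
    nlinarith [hpsd, hjj]

lemma riccati_posdef_entry_abs_le {d : ℕ} {X : Matrix (Fin d) (Fin d) ℝ} (hX : X.PosDef)
    (hsymm : Xᵀ = X) (i j : Fin d) {bi bj : ℝ} (hbi : X i i ≤ bi) (hbj : X j j ≤ bj) :
    |X i j| ≤ Real.sqrt bi * Real.sqrt bj := by
  have h1 : (X i j)^2 ≤ bi * bj := by
    calc (X i j)^2 ≤ X i i * X j j := riccati_posdef_entry_sq_le hX hsymm i j
      _ ≤ bi * bj := by
        have hii := riccati_posdef_diag_entry_pos hX i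
        have hjj := riccati_posdef_diag_entry_pos hX j
        nlinarith
  calc |X i j| = Real.sqrt ((X i j)^2) := (Real.sqrt_sq_eq_abs _).symm
    _ ≤ Real.sqrt (bi * bj) := Real.sqrt_le_sqrt h1
    _ = Real.sqrt bi * Real.sqrt bj := by
        rw [Real.sqrt_mul (le_trans (riccati_posdef_diag_entry_pos hX i).le hbi)]

lemma riccati_posdef_lower_bound {d : ℕ} (hd : 0 < d) {A : Matrix (Fin d) (Fin d) ℝ}
    (hA : A.PosDef) :
    ∃ α > (0:ℝ), ∀ v : Fin d → ℝ, α * ∑ i, (v i)^2 ≤ v ⬝ᵥ A *ᵥ v := by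
  set S : Set (Fin d → ℝ) := {v | ∑ i, (v i)^2 = 1} with hS
  have hScompact : IsCompact S := by
    have hclosed : IsClosed S := by
      have : Continuous fun v : Fin d → ℝ => ∑ i, (v i)^2 := by fun_prop
      exact isClosed_eq this continuous_const
    have hbdd : Bornology.IsBounded S := by
      apply Bornology.IsBounded.subset (Metric.isBounded_closedBall (x := (0 : Fin d → ℝ)) (r := 1))
      intro v hv
      simp only [Metric.mem_closedBall, dist_zero_right]
      rw [pi_norm_le_iff_of_nonneg (by norm_num)]
      intro i
      have h1 : (v i)^2 ≤ 1 := by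
        rw [← hv]
        exact Finset.single_le_sum (fun j _ => sq_nonneg (v j)) (Finset.mem_univ i)
      rw [Real.norm_eq_abs]
      nlinarith [abs_nonneg (v i), sq_abs (v i)]
    exact Metric.isCompact_of_isClosed_isBounded hclosed hbdd
  have hSne : S.Nonempty := by
    refine ⟨(Pi.single ⟨0, hd⟩ 1 : Fin d → ℝ), ?_⟩
    simp [hS, Pi.single_apply]
  have hcont : Continuous fun v : Fin d → ℝ => v ⬝ᵥ A *ᵥ v := by
    simp only [dotProduct, mulVec]
    fun_prop
  obtain ⟨v0, hv0S, hmin⟩ := hScompact.exists_isMinOn hSne hcont.continuousOn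
  have hv0ne : v0 ≠ 0 := by
    intro h
    rw [hS, Set.mem_setOf_eq, h] at hv0S
    simp at hv0S
  have hα : 0 < v0 ⬝ᵥ A *ᵥ v0 := by
    have := hA.dotProduct_mulVec_pos hv0ne
    rwa [star_trivial] at this
  refine ⟨v0 ⬝ᵥ A *ᵥ v0, hα, fun v => ?_⟩
  rcases eq_or_ne v 0 with rfl | hv
  · simp
  · have hsum : 0 < ∑ i, (v i)^2 := by
      obtain ⟨i, hi⟩ := Function.ne_iff.mp hv
      exact Finset.sum_pos' (fun j _ => sq_nonneg (v j))
        ⟨i, Finset.mem_univ i, (sq_nonneg (v i)).lt_of_ne (Ne.symm (pow_ne_zero 2 hi))⟩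
    set c : ℝ := Real.sqrt (∑ i, (v i)^2) with hc
    have hcpos : 0 < c := Real.sqrt_pos.mpr hsum
    have hc2 : c^2 = ∑ i, (v i)^2 := Real.sq_sqrt hsum.le
    set u : Fin d → ℝ := c⁻¹ • v with hu
    have huS : u ∈ S := by
      rw [hS, Set.mem_setOf_eq]
      have : ∑ i, (u i)^2 = (c⁻¹)^2 * ∑ i, (v i)^2 := by
        rw [Finset.mul_sum]
        apply Finset.sum_congr rfl
        intro i _
        simp [hu, smul_eq_mul]
        ring
      rw [this, ← hc2]
      field_simp
    have hform : u ⬝ᵥ A *ᵥ u = (c⁻¹)^2 * (v ⬝ᵥ A *ᵥ v) := by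
      rw [hu, smul_dotProduct, mulVec_smul, dotProduct_smul]
      simp [smul_eq_mul]; ring
    have := hmin huS
    simp only [Set.mem_setOf_eq] at this
    rw [hform] at this
    have hc2' : (0:ℝ) < c^2 := by positivity
    calc (v0 ⬝ᵥ A *ᵥ v0) * ∑ i, (v i)^2 = (v0 ⬝ᵥ A *ᵥ v0) * c^2 := by rw [hc2]
      _ ≤ ((c⁻¹)^2 * (v ⬝ᵥ A *ᵥ v)) * c^2 := by nlinarith [this]
      _ = v ⬝ᵥ A *ᵥ v := by field_simp

set_option maxHeartbeats 1600000 in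
lemma riccati_scalar_bounds {lam μ L t : ℝ} (hμ : 0 < μ) (h1 : μ ≤ |lam|) (h2 : |lam| ≤ L)
    (ht : Real.log 2 / (4*μ) ≤ t) :
    0 < (Real.exp (4*lam*t) - 1)/lam ∧
    ((Real.exp (4*lam*t) - 1)/lam)⁻¹ ≤ 2*L ∧
    Real.exp (4*lam*t) * ((Real.exp (4*lam*t) - 1)/lam)⁻¹ ≤ 2*L ∧
    Real.exp (2*lam*t) * ((Real.exp (4*lam*t) - 1)/lam)⁻¹ ≤ 2*L*Real.exp (-(2*μ)*t) ∧
    |Real.exp (4*lam*t) * ((Real.exp (4*lam*t) - 1)/lam)⁻¹ - max lam 0|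
      ≤ 2*L*Real.exp (-(2*μ)*t) := by
  have hL : 0 < L := lt_of_lt_of_le hμ (le_trans h1 h2)
  have hlam0 : lam ≠ 0 := by
    intro h; rw [h, abs_zero] at h1; linarith
  have htpos : 0 < t :=
    lt_of_lt_of_le (by positivity : (0:ℝ) < Real.log 2 / (4*μ)) ht
  have hlog : Real.log 2 ≤ 4*μ*t := by
    rw [div_le_iff₀ (by positivity : (0:ℝ) < 4*μ)] at ht
    linarith [ht]
  have h2exp : (2:ℝ) ≤ Real.exp (4*μ*t) := by
    calc (2:ℝ) = Real.exp (Real.log 2) := (Real.exp_log (by norm_num)).symm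
      _ ≤ Real.exp (4*μ*t) := Real.exp_le_exp.mpr hlog
  rcases lt_or_gt_of_ne hlam0 with hneg | hpos
  · -- lam < 0
    have habs : |lam| = -lam := abs_of_neg hneg
    rw [habs] at h1 h2
    obtain ⟨F, hF⟩ : ∃ F, Real.exp (4*lam*t) = F := ⟨_, rfl⟩
    have hFpos : 0 < F := hF ▸ Real.exp_pos _
    have hFhalf : F ≤ 1/2 := by
      rw [← hF]
      have : 4*lam*t ≤ -Real.log 2 := by nlinarith
      calc Real.exp (4*lam*t) ≤ Real.exp (-Real.log 2) := Real.exp_le_exp.mpr this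
        _ = 1/2 := by rw [Real.exp_neg, Real.exp_log] <;> norm_num
    have h1F : (1:ℝ)/2 ≤ 1 - F := by linarith
    have hginv : ((Real.exp (4*lam*t) - 1)/lam)⁻¹ = (-lam)/(1-F) := by
      rw [inv_div, hF, show F - 1 = -(1-F) by ring, div_neg, neg_div]
    have hgpos : 0 < (Real.exp (4*lam*t) - 1)/lam := by
      rw [hF]
      apply div_pos_of_neg_of_neg <;> nlinarith
    have hb : (-lam)/(1-F) ≤ 2*L := by
      rw [div_le_iff₀ (by linarith : (0:ℝ) < 1-F)]; nlinarith
    have hbpos : 0 ≤ (-lam)/(1-F) := div_nonneg (by linarith) (by linarith)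
    have hexp2 : Real.exp (2*lam*t) ≤ Real.exp (-(2*μ)*t) := by
      apply Real.exp_le_exp.mpr; nlinarith
    have hexp4 : F ≤ Real.exp (-(2*μ)*t) := by
      rw [← hF]; apply Real.exp_le_exp.mpr; nlinarith
    refine ⟨hgpos, by rw [hginv]; exact hb, ?_, ?_, ?_⟩
    · rw [hginv, hF]
      calc F * ((-lam)/(1-F)) ≤ 1 * ((-lam)/(1-F)) := by
            apply mul_le_mul_of_nonneg_right (by linarith) hbpos
        _ ≤ 2*L := by rw [one_mul]; exact hb
    · rw [hginv]
      calc Real.exp (2*lam*t) * ((-lam)/(1-F)) ≤ Real.exp (-(2*μ)*t) * (2*L) :=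
            mul_le_mul hexp2 hb hbpos (Real.exp_pos _).le
        _ = 2*L*Real.exp (-(2*μ)*t) := by ring
    · rw [hginv, hF, max_eq_right hneg.le, sub_zero, abs_of_nonneg (by positivity)]
      calc F * ((-lam)/(1-F)) ≤ F * (2*(-lam)) := by
            apply mul_le_mul_of_nonneg_left _ hFpos.le
            rw [div_le_iff₀ (by linarith : (0:ℝ) < 1-F)]; nlinarith
        _ ≤ 2*L*Real.exp (-(2*μ)*t) := by nlinarith [hexp4, hFpos]
  · -- lam > 0
    have habs : |lam| = lam := abs_of_pos hpos
    rw [habs] at h1 h2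
    obtain ⟨y, hy⟩ : ∃ y, Real.exp (2*lam*t) = y := ⟨_, rfl⟩
    have hypos : 0 < y := hy ▸ Real.exp_pos _
    have hE : Real.exp (4*lam*t) = y*y := by
      rw [show (4:ℝ)*lam*t = 2*lam*t + 2*lam*t by ring, Real.exp_add, hy]
    have hE2 : 2 ≤ y*y := by
      rw [← hE]
      calc (2:ℝ) ≤ Real.exp (4*μ*t) := h2exp
        _ ≤ Real.exp (4*lam*t) := Real.exp_le_exp.mpr (by nlinarith)
    have hEm1 : 0 < y*y - 1 := by nlinarith
    have hginv : ((Real.exp (4*lam*t) - 1)/lam)⁻¹ = lam/(y*y-1) := by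
      rw [inv_div, hE]
    have hgpos : 0 < (Real.exp (4*lam*t) - 1)/lam := by
      refine div_pos ?_ hpos
      rw [hE]; linarith
    have hyinv : y⁻¹ ≤ Real.exp (-(2*μ)*t) := by
      rw [← hy, ← Real.exp_neg]
      apply Real.exp_le_exp.mpr; nlinarith
    have hb : lam/(y*y-1) ≤ 2*L := by
      rw [div_le_iff₀ hEm1]; nlinarith
    refine ⟨hgpos, by rw [hginv]; exact hb, ?_, ?_, ?_⟩
    · rw [hginv, hE]
      rw [mul_div_assoc', div_le_iff₀ hEm1]; nlinarith
    · rw [hginv, hy]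
      have hinv1 : y * y⁻¹ = 1 := mul_inv_cancel₀ hypos.ne'
      have hkey : 2*y⁻¹ ≤ y := by
        have h := mul_le_mul_of_nonneg_left hE2 (inv_nonneg.mpr hypos.le)
        have h2' : y⁻¹ * (y*y) = y := by
          rw [← mul_assoc, inv_mul_cancel₀ hypos.ne', one_mul]
        rw [h2'] at h; linarith
      have step : y * (lam/(y*y-1)) ≤ 2*L*y⁻¹ := by
        rw [mul_div_assoc', div_le_iff₀ hEm1]
        have hexpand : 2*L*y⁻¹*(y*y-1) = 2*L*(y - y⁻¹) := by
          have h3 : y⁻¹*(y*y) = y := by rw [← mul_assoc, inv_mul_cancel₀ hypos.ne', one_mul]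
          linear_combination (2*L) * h3
        rw [hexpand]
        have hfact : lam * y ≤ L * y := mul_le_mul_of_nonneg_right h2 hypos.le
        have hfact2 : 2*(L*y⁻¹) ≤ L*y := by
          calc 2*(L*y⁻¹) = L*(2*y⁻¹) := by ring
            _ ≤ L*y := mul_le_mul_of_nonneg_left hkey hL.le
        nlinarith [hfact, hfact2]
      calc y * (lam/(y*y-1)) ≤ 2*L*y⁻¹ := step
        _ ≤ 2*L*Real.exp (-(2*μ)*t) :=
            mul_le_mul_of_nonneg_left hyinv (by linarith)
    · rw [hginv, hE, max_eq_left hpos.le]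
      have heq : (y*y) * (lam/(y*y-1)) - lam = lam/(y*y-1) := by
        rw [eq_div_iff hEm1.ne', sub_mul, mul_assoc, div_mul_cancel₀ _ hEm1.ne']
        ring
      rw [heq, abs_of_nonneg (by positivity)]
      have hEinv : (y*y)⁻¹ ≤ Real.exp (-(2*μ)*t) := by
        rw [← hE, ← Real.exp_neg]
        apply Real.exp_le_exp.mpr; nlinarith
      have hyy : 0 < y*y := mul_pos hypos hypos
      have hinv1 : (y*y)*(y*y)⁻¹ = 1 := mul_inv_cancel₀ hyy.ne'
      have step : lam/(y*y-1) ≤ 2*L*(y*y)⁻¹ := by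
        rw [div_le_iff₀ hEm1]
        have hexpand : 2*L*(y*y)⁻¹*(y*y-1) = 2*L*(1 - (y*y)⁻¹) := by
          linear_combination (2*L) * hinv1
        rw [hexpand]
        have h3 : (y*y)⁻¹ ≤ 1/2 := by nlinarith [hinv1, hE2, inv_nonneg.mpr hyy.le]
        nlinarith [h3, hL, h2]
      calc lam/(y*y-1) ≤ 2*L*(y*y)⁻¹ := step
        _ ≤ 2*L*Real.exp (-(2*μ)*t) := by nlinarith [hEinv, hL]

section RiccatiStruct

variable {d : ℕ} (C Z0 U : Matrix (Fin d) (Fin d) ℝ) (lam : Fin d → ℝ)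

lemma riccati_conj_collapse (hU : Uᵀ * U = 1) (P Q : Matrix (Fin d) (Fin d) ℝ) :
    (U * P * Uᵀ) * (U * Q * Uᵀ) = U * (P * Q) * Uᵀ := by
  simp only [Matrix.mul_assoc]
  rw [← Matrix.mul_assoc Uᵀ U, hU, Matrix.one_mul]

lemma riccati_conj_inv (hU : Uᵀ * U = 1) (hUU : U * Uᵀ = 1)
    (X : Matrix (Fin d) (Fin d) ℝ) :
    (U * X * Uᵀ)⁻¹ = U * X⁻¹ * Uᵀ := by
  have hUinv : U⁻¹ = Uᵀ := inv_eq_right_inv hUU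
  have hUTinv : Uᵀ⁻¹ = U := inv_eq_right_inv hU
  rw [Matrix.mul_inv_rev, Matrix.mul_inv_rev, hUTinv, hUinv, Matrix.mul_assoc]

lemma riccati_inv_split (A G B : Matrix (Fin d) (Fin d) ℝ) (hB : B = A + G)
    (hBu : IsUnit B.det) (hGu : IsUnit G.det) :
    B⁻¹ = G⁻¹ - B⁻¹ * A * G⁻¹ := by
  apply inv_eq_right_inv
  rw [Matrix.mul_sub, ← Matrix.mul_assoc, ← Matrix.mul_assoc,
    Matrix.mul_nonsing_inv _ hBu, Matrix.one_mul]
  nth_rewrite 1 [hB]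
  rw [Matrix.add_mul, Matrix.mul_nonsing_inv _ hGu]
  abel

lemma riccati_g_nonneg (l t : ℝ) (hl : l ≠ 0) (ht : 0 ≤ t) :
    0 ≤ (Real.exp (4*l*t) - 1)/l := by
  rcases lt_or_gt_of_ne hl with hneg | hpos
  · have h1 : Real.exp (4*l*t) ≤ 1 := by
      rw [show (1:ℝ) = Real.exp 0 by simp]
      apply Real.exp_le_exp.mpr; nlinarith
    rw [show (Real.exp (4*l*t) - 1)/l = (1 - Real.exp (4*l*t))/(-l) by
      rw [show (1 - Real.exp (4*l*t)) = -(Real.exp (4*l*t) - 1) by ring, neg_div_neg_eq]]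
    apply div_nonneg (by linarith) (by linarith)
  · apply div_nonneg _ hpos.le
    have h1 : (1:ℝ) ≤ Real.exp (4*l*t) := by
      rw [show (1:ℝ) = Real.exp 0 by simp]
      apply Real.exp_le_exp.mpr; positivity
    linarith

lemma riccati_exp_smul_eq (hU : Uᵀ * U = 1) (hCdec : C = U * diagonal lam * Uᵀ) (c : ℝ) :
    NormedSpace.exp (c • C) = U * diagonal (fun i => Real.exp (c * lam i)) * Uᵀ := by
  have hUU : U * Uᵀ = 1 := mul_eq_one_comm.mp hU
  have hUdet : IsUnit U.det :=
    IsUnit.of_mul_eq_one _ (by rw [← det_mul, hUU, det_one])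
  have hUunit : IsUnit U := (isUnit_iff_isUnit_det U).mpr hUdet
  have hUinv : U⁻¹ = Uᵀ := inv_eq_right_inv hUU
  have hdg : c • diagonal lam = diagonal (fun i => c * lam i) := by
    ext i j
    simp only [Matrix.smul_apply, diagonal_apply, smul_eq_mul]
    split <;> simp
  have h2 : c • (U * diagonal lam * Uᵀ) = U * diagonal (fun i => c * lam i) * Uᵀ := by
    rw [← smul_mul_assoc, ← mul_smul_comm, hdg]
  have h1 : c • C = U * diagonal (fun i => c * lam i) * U⁻¹ := by
    rw [hCdec, hUinv, h2]
  rw [h1, Matrix.exp_conj U _ hUunit, Matrix.exp_diagonal, hUinv]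
  have h3 : (NormedSpace.exp fun i => c * lam i) = fun i => Real.exp (c * lam i) := by
    funext i
    rw [Pi.coe_exp, ← Real.exp_eq_exp_ℝ]
  rw [h3]

lemma riccati_Mfun_eq (hU : Uᵀ * U = 1) (hCdec : C = U * diagonal lam * Uᵀ)
    (hlamne : ∀ i, lam i ≠ 0) (t : ℝ) :
    Mfun C Z0 t = U * ((Uᵀ * Z0⁻¹ * U) +
      diagonal (fun k => (Real.exp (4 * lam k * t) - 1) / lam k)) * Uᵀ := by
  have hUU : U * Uᵀ = 1 := mul_eq_one_comm.mp hU
  unfold Mfun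
  rw [Matrix.mul_add, Matrix.add_mul]
  congr 1
  · calc Z0⁻¹ = (U * Uᵀ) * Z0⁻¹ * (U * Uᵀ) := by rw [hUU]; simp
      _ = U * (Uᵀ * Z0⁻¹ * U) * Uᵀ := by
        simp only [Matrix.mul_assoc]
  · ext i j
    show (4:ℝ) * ∫ s in (0:ℝ)..t, (NormedSpace.exp ((4 * s) • C)) i j = _
    have hintg : ∀ s : ℝ, (NormedSpace.exp ((4 * s) • C)) i j
        = ∑ k, U i k * Real.exp (4 * s * lam k) * U j k := by
      intro s
      rw [riccati_exp_smul_eq C U lam hU hCdec (4 * s), riccati_conj_diag_entry]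
    have hint : (∫ s in (0:ℝ)..t, (NormedSpace.exp ((4 * s) • C)) i j)
        = ∑ k, U i k * ((Real.exp (4 * lam k * t) - 1) / (4 * lam k)) * U j k := by
      rw [intervalIntegral.integral_congr
        (g := fun s => ∑ k, U i k * Real.exp (4 * s * lam k) * U j k) (fun s _ => hintg s)]
      rw [intervalIntegral.integral_finset_sum]
      · apply Finset.sum_congr rfl
        intro k _
        have : ∀ s : ℝ, U i k * Real.exp (4 * s * lam k) * U j k
            = (U i k * U j k) * Real.exp ((4 * lam k) * s) := by
          intro s; ring_nf
        rw [intervalIntegral.integral_congr (fun s _ => this s)]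
        rw [intervalIntegral.integral_const_mul, riccati_integral_exp_const_mul _ _
          (by simpa using hlamne k)]
        ring_nf
      · intro k _
        apply Continuous.intervalIntegrable
        fun_prop
    rw [hint, riccati_conj_diag_entry, Finset.mul_sum]
    apply Finset.sum_congr rfl
    intro k _
    have hk := hlamne k
    field_simp

lemma riccati_Zfun_eq (hU : Uᵀ * U = 1) (hCdec : C = U * diagonal lam * Uᵀ)
    (hlamne : ∀ i, lam i ≠ 0) (t : ℝ) :
    Zfun C Z0 t = U * (diagonal (fun i => Real.exp (2 * lam i * t)) *
      ((Uᵀ * Z0⁻¹ * U) + diagonal (fun k => (Real.exp (4 * lam k * t) - 1) / lam k))⁻¹ *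
      diagonal (fun i => Real.exp (2 * lam i * t))) * Uᵀ := by
  have hUU : U * Uᵀ = 1 := mul_eq_one_comm.mp hU
  unfold Zfun
  rw [riccati_exp_smul_eq C U lam hU hCdec (2 * t),
    riccati_Mfun_eq C Z0 U lam hU hCdec hlamne t,
    riccati_conj_inv U hU hUU, riccati_conj_collapse U hU, riccati_conj_collapse U hU]
  have h3 : (fun i => Real.exp (2 * t * lam i)) = fun i => Real.exp (2 * lam i * t) := by
    funext i; ring_nf
  rw [h3]

end RiccatiStruct

lemma riccati_prod3_le {a b c a' b' c' : ℝ} (ha : 0 ≤ a) (hb : 0 ≤ b) (hc : 0 ≤ c)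
    (h1 : a ≤ a') (h2 : b ≤ b') (h3 : c ≤ c') : a*b*c ≤ a'*b'*c' :=
  mul_le_mul (mul_le_mul h1 h2 hb (ha.trans h1)) h3 hc
    (mul_nonneg (ha.trans h1) (hb.trans h2))

set_option maxHeartbeats 4000000 in
/-- **Exponential convergence of the Riccati/Oja flow.** -/
theorem riccati_flow_exponential_convergence
    (d : ℕ) (C Z0 : Matrix (Fin d) (Fin d) ℝ) (hC : C.IsSymm)
    (hCinv : IsUnit C.det)
    (hZ0 : Z0.IsSymm) (hZ0pd : Z0.PosDef)
    (U : Matrix (Fin d) (Fin d) ℝ) (lam : Fin d → ℝ)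
    (hU : Uᵀ * U = 1) (hlam : Antitone lam)
    (hCdec : C = U * Matrix.diagonal lam * Uᵀ)
    (Cp : Matrix (Fin d) (Fin d) ℝ)
    (hCp : Cp = U * Matrix.diagonal (fun i => max (lam i) 0) * Uᵀ) :
    ∃ K > (0:ℝ), ∃ ρ > (0:ℝ), ∀ t : ℝ, 0 ≤ t →
      frobNorm (Zfun C Z0 t - Cp) ≤ K * Real.exp (-ρ * t) := by
  classical
  rcases Nat.eq_zero_or_pos d with hd0 | hd
  · subst hd0
    refine ⟨1, one_pos, 1, one_pos, fun t _ => ?_⟩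
    have h0 : frobNorm (Zfun C Z0 t - Cp) = 0 := by
      unfold frobNorm
      simp
    rw [h0]
    positivity
  -- main case
  have hUU : U * Uᵀ = 1 := mul_eq_one_comm.mp hU
  -- eigenvalues are nonzero
  have hdetC : C.det = (det U * det Uᵀ) * ∏ i, lam i := by
    rw [hCdec, det_mul, det_mul, det_diagonal]; ring
  have hUdet1 : U.det * Uᵀ.det = 1 := by rw [← det_mul, hUU, det_one]
  have hlamne : ∀ i, lam i ≠ 0 := by
    intro i hzero
    have h0 : C.det = 0 := by
      rw [hdetC, Finset.prod_eq_zero (Finset.mem_univ i) hzero, mul_zero]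
    rw [h0] at hCinv
    simp at hCinv
  -- min / max of |lam|
  obtain ⟨i0, _, hminp⟩ := Finset.exists_min_image Finset.univ (fun i => |lam i|)
    ⟨⟨0, hd⟩, Finset.mem_univ _⟩
  obtain ⟨i1, _, hmaxp⟩ := Finset.exists_max_image Finset.univ (fun i => |lam i|)
    ⟨⟨0, hd⟩, Finset.mem_univ _⟩
  set μ : ℝ := |lam i0| with hμdef
  set L : ℝ := |lam i1| with hLdef
  have hμpos : 0 < μ := abs_pos.mpr (hlamne i0)
  have hLpos : 0 < L := abs_pos.mpr (hlamne i1)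
  have hmin : ∀ i, μ ≤ |lam i| := fun i => hminp i (Finset.mem_univ i)
  have hmax : ∀ i, |lam i| ≤ L := fun i => hmaxp i (Finset.mem_univ i)
  have hμL : μ ≤ L := le_trans (hmin i1) (le_refl _)
  set t0 : ℝ := Real.log 2 / (4*μ) with ht0def
  have ht0pos : 0 < t0 := by positivity
  -- A' and α
  set A' : Matrix (Fin d) (Fin d) ℝ := Uᵀ * Z0⁻¹ * U with hA'def
  have hA'pd : A'.PosDef := riccati_posdef_conj hZ0pd.inv hU
  have hA'symm : A'ᵀ = A' := by
    rw [hA'def]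
    simp only [transpose_mul, transpose_transpose, transpose_nonsing_inv, hZ0.eq,
      Matrix.mul_assoc]
  obtain ⟨α, hαpos, hαform⟩ := riccati_posdef_lower_bound hd hA'pd
  -- column-sum bound for A'
  set SA : ℝ := (∑ k, ∑ j, |A' k j|) + 1 with hSAdef
  have hSA1 : 1 ≤ SA := by
    rw [hSAdef]
    have : (0:ℝ) ≤ ∑ k, ∑ j, |A' k j| :=
      Finset.sum_nonneg fun k _ => Finset.sum_nonneg fun j _ => abs_nonneg _
    linarith
  have hSApos : 0 < SA := lt_of_lt_of_le one_pos hSA1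
  have hSA : ∀ j, (∑ k, |A' k j|) ≤ SA := by
    intro j
    rw [hSAdef]
    have h1 : (∑ k, |A' k j|) ≤ ∑ k, ∑ j', |A' k j'| := by
      apply Finset.sum_le_sum
      intro k _
      exact Finset.single_le_sum (fun j' _ => abs_nonneg (A' k j')) (Finset.mem_univ j)
    linarith
  -- constants
  set K0 : ℝ := 2*L + 2*L*(SA*(2*L)) with hK0def
  set K1 : ℝ := Real.exp (2*L*t0) * (Real.sqrt (1/α) * Real.sqrt (1/α)) * Real.exp (2*L*t0)
      + L with hK1def
  have hK0pos : 0 < K0 := by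
    rw [hK0def]; positivity
  have hK1pos : 0 < K1 := by
    rw [hK1def]; positivity
  set K : ℝ := d*(K0 + K1*Real.exp (2*μ*t0)) + 1 with hKdef
  have hKpos : 0 < K := by
    rw [hKdef]; positivity
  refine ⟨K, hKpos, 2*μ, by positivity, ?_⟩
  intro t ht
  -- per-t structures
  set g : Fin d → ℝ := fun k => (Real.exp (4 * lam k * t) - 1) / lam k with hgdef
  set e : Fin d → ℝ := fun i => Real.exp (2 * lam i * t) with hedef
  have hepos : ∀ i, 0 < e i := fun i => Real.exp_pos _
  set Bm : Matrix (Fin d) (Fin d) ℝ := A' + diagonal g with hBdef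
  have hgnn : ∀ i, 0 ≤ g i := fun i => riccati_g_nonneg (lam i) t (hlamne i) ht
  have hBpd : Bm.PosDef :=
    hA'pd.add_posSemidef (posSemidef_diagonal_iff.mpr fun i => by
      simpa using hgnn i)
  have hBsymm : Bmᵀ = Bm := by
    rw [hBdef, transpose_add, hA'symm, diagonal_transpose]
  have hXpd : (Bm⁻¹).PosDef := hBpd.inv
  have hXsymm : (Bm⁻¹)ᵀ = Bm⁻¹ := by
    rw [transpose_nonsing_inv, hBsymm]
  -- reduce to diagonal-conjugated form
  have hZeq : Zfun C Z0 t - Cp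
      = U * (diagonal e * Bm⁻¹ * diagonal e - diagonal (fun i => max (lam i) 0)) * Uᵀ := by
    rw [riccati_Zfun_eq C Z0 U lam hU hCdec hlamne t, hCp]
    rw [← Matrix.sub_mul, ← Matrix.mul_sub]
  have hfrob : frobNorm (Zfun C Z0 t - Cp)
      = frobNorm (diagonal e * Bm⁻¹ * diagonal e - diagonal (fun i => max (lam i) 0)) := by
    rw [hZeq, riccati_frobNorm_conj _ _ hU]
  -- quadratic form of Bm
  have hA'nn : ∀ v : Fin d → ℝ, 0 ≤ v ⬝ᵥ A' *ᵥ v := by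
    intro v
    have := hA'pd.posSemidef.dotProduct_mulVec_nonneg v
    rwa [star_trivial] at this
  have hsplitform : ∀ v : Fin d → ℝ, v ⬝ᵥ Bm *ᵥ v
      = v ⬝ᵥ A' *ᵥ v + ∑ k, g k * (v k)^2 := by
    intro v
    rw [hBdef, add_mulVec, dotProduct_add]
    congr 1
    simp only [dotProduct, mulVec_diagonal]
    apply Finset.sum_congr rfl
    intro k _
    ring
  have hdiagform : ∀ (v : Fin d → ℝ) i, g i * (v i)^2 ≤ ∑ k, g k * (v k)^2 := by
    intro v i
    exact Finset.single_le_sum (f := fun k => g k * (v k)^2)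
      (fun k _ => mul_nonneg (hgnn k) (sq_nonneg _)) (Finset.mem_univ i)
  have hXiiα : ∀ i, Bm⁻¹ i i ≤ 1/α := by
    intro i
    apply riccati_inv_diag_le hBpd i hαpos
    intro v
    calc α * (v i)^2 ≤ α * ∑ k, (v k)^2 := by
          apply mul_le_mul_of_nonneg_left _ hαpos.le
          exact Finset.single_le_sum (f := fun k => (v k)^2)
            (fun k _ => sq_nonneg _) (Finset.mem_univ i)
      _ ≤ v ⬝ᵥ A' *ᵥ v := hαform v
      _ ≤ v ⬝ᵥ Bm *ᵥ v := by
          rw [hsplitform v]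
          have : 0 ≤ ∑ k, g k * (v k)^2 :=
            Finset.sum_nonneg fun k _ => mul_nonneg (hgnn k) (sq_nonneg _)
          linarith
  -- entry formula
  have hentry : ∀ i j, (diagonal e * Bm⁻¹ * diagonal e
        - diagonal (fun i => max (lam i) 0)) i j
      = e i * Bm⁻¹ i j * e j - (if i = j then max (lam i) 0 else 0) := by
    intro i j
    rw [Matrix.sub_apply, mul_diagonal, diagonal_mul, diagonal_apply]
  have hee : ∀ i, e i * e i = Real.exp (4 * lam i * t) := by
    intro i
    rw [hedef]
    show Real.exp (2 * lam i * t) * Real.exp (2 * lam i * t) = _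
    rw [← Real.exp_add]
    ring_nf
  rw [hfrob]
  rcases le_or_gt t0 t with hreg | hreg
  · -- large t regime
    have hsb : ∀ i, 0 < g i ∧ (g i)⁻¹ ≤ 2*L ∧
        Real.exp (4 * lam i * t) * (g i)⁻¹ ≤ 2*L ∧
        e i * (g i)⁻¹ ≤ 2*L*Real.exp (-(2*μ)*t) ∧
        |Real.exp (4 * lam i * t) * (g i)⁻¹ - max (lam i) 0| ≤ 2*L*Real.exp (-(2*μ)*t) := by
      intro i
      have := riccati_scalar_bounds hμpos (hmin i) (hmax i) (ht0def ▸ hreg)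
      simpa [hgdef, hedef] using this
    have hgpos : ∀ i, 0 < g i := fun i => (hsb i).1
    have hGdet : IsUnit (diagonal g).det := by
      rw [det_diagonal]
      exact (Finset.prod_pos fun i _ => hgpos i).ne'.isUnit
    have hGinv : (diagonal g)⁻¹ = diagonal (fun k => (g k)⁻¹) := by
      apply inv_eq_right_inv
      rw [diagonal_mul_diagonal]
      have hgg : (fun i => g i * (g i)⁻¹) = (fun _ => (1:ℝ)) := by
        funext k
        exact mul_inv_cancel₀ (hgpos k).ne'
      rw [hgg, diagonal_one]
    have hsplitinv : Bm⁻¹ = (diagonal g)⁻¹ - Bm⁻¹ * A' * (diagonal g)⁻¹ :=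
      riccati_inv_split A' (diagonal g) Bm hBdef hBpd.det_pos.ne'.isUnit hGdet
    have hXij : ∀ i j, Bm⁻¹ i j
        = (if i = j then (g i)⁻¹ else 0) - (∑ k, Bm⁻¹ i k * A' k j) * (g j)⁻¹ := by
      intro i j
      conv_lhs => rw [hsplitinv]
      rw [Matrix.sub_apply, hGinv, diagonal_apply, mul_diagonal, mul_apply]
    -- diagonal entry bound for Bm⁻¹ in terms of g
    have hXiig : ∀ i, Bm⁻¹ i i ≤ 1/(g i) := by
      intro i
      apply riccati_inv_diag_le hBpd i (hgpos i)
      intro v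
      rw [hsplitform v]
      have h1 := hdiagform v i
      have h2 := hA'nn v
      linarith
    have hXik : ∀ i k, |Bm⁻¹ i k| ≤ Real.sqrt ((g i)⁻¹) * Real.sqrt ((g k)⁻¹) := by
      intro i k
      apply riccati_posdef_entry_abs_le hXpd hXsymm i k
      · have h := hXiig i; rwa [one_div] at h
      · have h := hXiig k; rwa [one_div] at h
    have hsqrt2L : ∀ i, Real.sqrt ((g i)⁻¹) ≤ Real.sqrt (2*L) :=
      fun i => Real.sqrt_le_sqrt (hsb i).2.1
    have hesqrt : ∀ i, e i * Real.sqrt ((g i)⁻¹) ≤ Real.sqrt (2*L) := by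
      intro i
      have h1 : e i * Real.sqrt ((g i)⁻¹)
          = Real.sqrt (Real.exp (4 * lam i * t) * (g i)⁻¹) := by
        rw [← hee i, Real.sqrt_mul (by positivity), Real.sqrt_mul_self (hepos i).le]
      rw [h1]
      exact Real.sqrt_le_sqrt (hsb i).2.2.1
    have hsumb : ∀ i j, |∑ k, Bm⁻¹ i k * A' k j|
        ≤ Real.sqrt ((g i)⁻¹) * (Real.sqrt (2*L) * SA) := by
      intro i j
      calc |∑ k, Bm⁻¹ i k * A' k j| ≤ ∑ k, |Bm⁻¹ i k * A' k j| :=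
            Finset.abs_sum_le_sum_abs _ _
        _ ≤ ∑ k, Real.sqrt ((g i)⁻¹) * Real.sqrt (2*L) * |A' k j| := by
            apply Finset.sum_le_sum
            intro k _
            rw [abs_mul]
            calc |Bm⁻¹ i k| * |A' k j|
                ≤ (Real.sqrt ((g i)⁻¹) * Real.sqrt ((g k)⁻¹)) * |A' k j| :=
                  mul_le_mul_of_nonneg_right (hXik i k) (abs_nonneg _)
              _ ≤ (Real.sqrt ((g i)⁻¹) * Real.sqrt (2*L)) * |A' k j| := by
                  apply mul_le_mul_of_nonneg_right _ (abs_nonneg _)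
                  exact mul_le_mul_of_nonneg_left (hsqrt2L k) (Real.sqrt_nonneg _)
        _ = Real.sqrt ((g i)⁻¹) * Real.sqrt (2*L) * ∑ k, |A' k j| := by
            rw [← Finset.mul_sum]
        _ ≤ Real.sqrt ((g i)⁻¹) * Real.sqrt (2*L) * SA := by
            apply mul_le_mul_of_nonneg_left (hSA j)
            positivity
        _ = Real.sqrt ((g i)⁻¹) * (Real.sqrt (2*L) * SA) := by ring
    have hoff : ∀ i j, e i * |∑ k, Bm⁻¹ i k * A' k j| * ((g j)⁻¹ * e j)
        ≤ 2*L*(SA*(2*L*Real.exp (-(2*μ)*t))) := by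
      intro i j
      have step : e i * |∑ k, Bm⁻¹ i k * A' k j| * ((g j)⁻¹ * e j)
          ≤ e i * (Real.sqrt ((g i)⁻¹) * (Real.sqrt (2*L) * SA)) * ((g j)⁻¹ * e j) := by
        apply mul_le_mul_of_nonneg_right _
          (mul_nonneg (inv_nonneg.mpr (hgpos j).le) (hepos j).le)
        exact mul_le_mul_of_nonneg_left (hsumb i j) (hepos i).le
      have step2 : e i * (Real.sqrt ((g i)⁻¹) * (Real.sqrt (2*L) * SA)) * ((g j)⁻¹ * e j)
          = (e i * Real.sqrt ((g i)⁻¹)) * (Real.sqrt (2*L) * SA) * (e j * (g j)⁻¹) := by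
        ring
      have step3 : (e i * Real.sqrt ((g i)⁻¹)) * (Real.sqrt (2*L) * SA) * (e j * (g j)⁻¹)
          ≤ Real.sqrt (2*L) * (Real.sqrt (2*L) * SA) * (2*L*Real.exp (-(2*μ)*t)) := by
        apply riccati_prod3_le (mul_nonneg (hepos i).le (Real.sqrt_nonneg _))
          (mul_nonneg (Real.sqrt_nonneg _) hSApos.le)
          (mul_nonneg (hepos j).le (inv_nonneg.mpr (hgpos j).le))
          (hesqrt i) (le_refl _) (hsb j).2.2.2.1
      have step4 : Real.sqrt (2*L) * (Real.sqrt (2*L) * SA) * (2*L*Real.exp (-(2*μ)*t))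
          = (Real.sqrt (2*L) * Real.sqrt (2*L)) * (SA * (2*L*Real.exp (-(2*μ)*t))) := by
        ring
      have hsq : Real.sqrt (2*L) * Real.sqrt (2*L) = 2*L :=
        Real.mul_self_sqrt (by positivity)
      calc e i * |∑ k, Bm⁻¹ i k * A' k j| * ((g j)⁻¹ * e j)
          ≤ e i * (Real.sqrt ((g i)⁻¹) * (Real.sqrt (2*L) * SA)) * ((g j)⁻¹ * e j) := step
        _ = (e i * Real.sqrt ((g i)⁻¹)) * (Real.sqrt (2*L) * SA) * (e j * (g j)⁻¹) := step2
        _ ≤ Real.sqrt (2*L) * (Real.sqrt (2*L) * SA) * (2*L*Real.exp (-(2*μ)*t)) := step3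
        _ = (Real.sqrt (2*L) * Real.sqrt (2*L)) * (SA * (2*L*Real.exp (-(2*μ)*t))) := step4
        _ = 2*L*(SA*(2*L*Real.exp (-(2*μ)*t))) := by rw [hsq]
    have hent : ∀ i j, |(diagonal e * Bm⁻¹ * diagonal e
        - diagonal (fun i => max (lam i) 0)) i j| ≤ K0 * Real.exp (-(2*μ)*t) := by
      intro i j
      rw [hentry i j, hXij i j]
      rcases eq_or_ne i j with rfl | hij
      · simp only [eq_self_iff_true, if_true]
        have hval : e i * ((g i)⁻¹ - (∑ k, Bm⁻¹ i k * A' k i) * (g i)⁻¹) * e i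
              - max (lam i) 0
            = (Real.exp (4 * lam i * t) * (g i)⁻¹ - max (lam i) 0)
              - e i * ((∑ k, Bm⁻¹ i k * A' k i) * (g i)⁻¹) * e i := by
          rw [← hee i]; ring
        rw [hval]
        calc |(Real.exp (4 * lam i * t) * (g i)⁻¹ - max (lam i) 0)
              - e i * ((∑ k, Bm⁻¹ i k * A' k i) * (g i)⁻¹) * e i|
            ≤ |Real.exp (4 * lam i * t) * (g i)⁻¹ - max (lam i) 0|
              + |e i * ((∑ k, Bm⁻¹ i k * A' k i) * (g i)⁻¹) * e i| := abs_sub _ _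
          _ ≤ 2*L*Real.exp (-(2*μ)*t) + 2*L*(SA*(2*L*Real.exp (-(2*μ)*t))) := by
              apply add_le_add (hsb i).2.2.2.2
              have habs : |e i * ((∑ k, Bm⁻¹ i k * A' k i) * (g i)⁻¹) * e i|
                  = e i * |∑ k, Bm⁻¹ i k * A' k i| * ((g i)⁻¹ * e i) := by
                simp only [abs_mul, abs_of_nonneg (hepos i).le,
                  abs_of_nonneg (inv_nonneg.mpr (hgpos i).le)]
                ring
              rw [habs]
              exact hoff i i
          _ = K0 * Real.exp (-(2*μ)*t) := by rw [hK0def]; ring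
      · rw [if_neg hij, if_neg hij]
        have hval : e i * ((0:ℝ) - (∑ k, Bm⁻¹ i k * A' k j) * (g j)⁻¹) * e j - 0
            = -(e i * ((∑ k, Bm⁻¹ i k * A' k j) * (g j)⁻¹) * e j) := by ring
        rw [hval, abs_neg]
        have habs : |e i * ((∑ k, Bm⁻¹ i k * A' k j) * (g j)⁻¹) * e j|
            = e i * |∑ k, Bm⁻¹ i k * A' k j| * ((g j)⁻¹ * e j) := by
          simp only [abs_mul, abs_of_nonneg (hepos i).le, abs_of_nonneg (hepos j).le,
            abs_of_nonneg (inv_nonneg.mpr (hgpos j).le)]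
          ring
        rw [habs]
        calc e i * |∑ k, Bm⁻¹ i k * A' k j| * ((g j)⁻¹ * e j)
            ≤ 2*L*(SA*(2*L*Real.exp (-(2*μ)*t))) := hoff i j
          _ ≤ K0 * Real.exp (-(2*μ)*t) := by
              rw [hK0def]
              nlinarith [mul_pos hLpos (Real.exp_pos (-(2*μ)*t))]
    calc frobNorm (diagonal e * Bm⁻¹ * diagonal e - diagonal (fun i => max (lam i) 0))
        ≤ d * (K0 * Real.exp (-(2*μ)*t)) := riccati_frobNorm_le _ (by positivity) hent
      _ ≤ K * Real.exp (-(2*μ)*t) := by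
          rw [← mul_assoc]
          apply mul_le_mul_of_nonneg_right _ (Real.exp_pos _).le
          rw [hKdef]
          have h1 : 0 ≤ (d:ℝ) := Nat.cast_nonneg d
          have h2 : 0 ≤ K1*Real.exp (2*μ*t0) := by positivity
          nlinarith [mul_nonneg h1 h2]
  · -- small t regime
    have hXijb : ∀ i j, |Bm⁻¹ i j| ≤ Real.sqrt (1/α) * Real.sqrt (1/α) :=
      fun i j => riccati_posdef_entry_abs_le hXpd hXsymm i j (hXiiα i) (hXiiα j)
    have heb : ∀ i, e i ≤ Real.exp (2*L*t0) := by
      intro i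
      rw [hedef]
      apply Real.exp_le_exp.mpr
      have h1 : lam i ≤ |lam i| := le_abs_self _
      have h2 := hmax i
      nlinarith [ht, hreg.le, hLpos]
    have hent : ∀ i j, |(diagonal e * Bm⁻¹ * diagonal e
        - diagonal (fun i => max (lam i) 0)) i j| ≤ K1 := by
      intro i j
      rw [hentry i j]
      have h1 : |e i * Bm⁻¹ i j * e j|
          ≤ Real.exp (2*L*t0) * (Real.sqrt (1/α) * Real.sqrt (1/α)) * Real.exp (2*L*t0) := by
        rw [abs_mul, abs_mul, abs_of_nonneg (hepos i).le, abs_of_nonneg (hepos j).le]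
        exact riccati_prod3_le (hepos i).le (abs_nonneg _) (hepos j).le
          (heb i) (hXijb i j) (heb j)
      have h2 : |(if i = j then max (lam i) 0 else 0 : ℝ)| ≤ L := by
        split
        · rw [abs_of_nonneg (le_max_right _ _)]
          calc max (lam i) 0 ≤ |lam i| := max_le (le_abs_self _) (abs_nonneg _)
            _ ≤ L := hmax i
        · rw [abs_zero]; exact hLpos.le
      calc |e i * Bm⁻¹ i j * e j - (if i = j then max (lam i) 0 else 0)|
          ≤ |e i * Bm⁻¹ i j * e j| + |(if i = j then max (lam i) 0 else 0 : ℝ)| :=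
            abs_sub _ _
        _ ≤ Real.exp (2*L*t0) * (Real.sqrt (1/α) * Real.sqrt (1/α)) * Real.exp (2*L*t0)
            + L := add_le_add h1 h2
        _ = K1 := by rw [hK1def]
    have hfb : frobNorm (diagonal e * Bm⁻¹ * diagonal e
        - diagonal (fun i => max (lam i) 0)) ≤ d * K1 :=
      riccati_frobNorm_le _ hK1pos.le hent
    have hfinal : (d:ℝ) * K1 ≤ K * Real.exp (-(2*μ)*t) := by
      have hexpident : Real.exp (2*μ*t0) * Real.exp (-(2*μ)*t0) = 1 := by
        rw [← Real.exp_add]; ring_nf; exact Real.exp_zero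
      have hmono : Real.exp (-(2*μ)*t0) ≤ Real.exp (-(2*μ)*t) := by
        apply Real.exp_le_exp.mpr
        nlinarith [hreg.le, hμpos]
      have h1 : (d:ℝ) * K1 = (d:ℝ)*K1*(Real.exp (2*μ*t0) * Real.exp (-(2*μ)*t0)) := by
        rw [hexpident, mul_one]
      rw [h1]
      have h2 : (d:ℝ)*K1*(Real.exp (2*μ*t0) * Real.exp (-(2*μ)*t0))
          ≤ (d:ℝ)*K1*(Real.exp (2*μ*t0) * Real.exp (-(2*μ)*t)) := by
        apply mul_le_mul_of_nonneg_left _ (by positivity)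
        exact mul_le_mul_of_nonneg_left hmono (Real.exp_pos _).le
      calc (d:ℝ)*K1*(Real.exp (2*μ*t0) * Real.exp (-(2*μ)*t0))
          ≤ (d:ℝ)*K1*(Real.exp (2*μ*t0) * Real.exp (-(2*μ)*t)) := h2
        _ = ((d:ℝ)*(K1*Real.exp (2*μ*t0))) * Real.exp (-(2*μ)*t) := by ring
        _ ≤ K * Real.exp (-(2*μ)*t) := by
            apply mul_le_mul_of_nonneg_right _ (Real.exp_pos _).le
            rw [hKdef]
            have h3 : 0 ≤ (d:ℝ) := Nat.cast_nonneg d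
            nlinarith [mul_nonneg h3 hK0pos.le]
    exact le_trans hfb hfinal
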